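/- arXiv:2110.10815 — 11 statements merged into one kernel-verified Lean document; each statement's English description precedes it below -/
import Mathlib

section
/- Let λ, d > 0 and η > 0, and let the sequences (x_t), (y_t) be defined by x_0 = y_0 = 0, x_{t+1} = x_t + η d (λ − x_t y_t), y_{t+1} = y_t + η x_t (λ − x_t y_t). Then for every t ≥ 0, y_t = x_t²/(2d) − S_t/(2d), where S_0 = 0 and S_t = Σ_{i=1}^t (x_i − x_{i−1})². -/
/-- Discretized FA dynamics: with `x 0 = y 0 = 0`,
`x (t+1) = x t + η d (λ - x t * y t)`, `y (t+1) = y t + η * x t * (λ - x t * y t)`,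
we have `y t = x t ^ 2 / (2 d) - S t / (2 d)` where
`S t = ∑_{i=1}^t (x i - x (i-1))^2`. -/
theorem stmt_0 (lam d η : ℝ) (hlam : 0 < lam) (hd : 0 < d) (hη : 0 < η)
    (x y : ℕ → ℝ) (hx0 : x 0 = 0) (hy0 : y 0 = 0)
    (hx : ∀ t, x (t + 1) = x t + η * d * (lam - x t * y t))
    (hy : ∀ t, y (t + 1) = y t + η * x t * (lam - x t * y t)) :
    ∀ t, y t = (x t) ^ 2 / (2 * d)
      - (∑ i ∈ Finset.range t, (x (i + 1) - x i) ^ 2) / (2 * d) := by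
  intro t
  induction t with
  | zero => simp [hx0, hy0]
  | succ n ih =>
      rw [Finset.sum_range_succ, hy n, hx n, ih]
      field_simp
      ring
end

section
/- Let λ, d > 0 and η > 0, and let the sequences (x_t), (y_t) be defined by x_0 = y_0 = 0, x_{t+1} = x_t + η d (λ − x_t y_t), y_{t+1} = y_t + η x_t (λ − x_t y_t). Then for every t ≥ 0, x_{t+1} = x_t + (η/2)(2dλ − x_t³ + x_t S_t), where S_0 = 0 and S_t = Σ_{i=1}^t (x_i − x_{i−1})². -/
/-- Discretized FA dynamics: with `x 0 = y 0 = 0`, the recurrence for `x` can be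
rewritten as `x (t+1) = x t + (η/2) * (2 d λ - (x t)^3 + x t * S t)`, where
`S t = ∑_{i=1}^t (x i - x (i-1))^2`. -/
theorem stmt_1 (lam d η : ℝ) (hlam : 0 < lam) (hd : 0 < d) (hη : 0 < η)
    (x y : ℕ → ℝ) (hx0 : x 0 = 0) (hy0 : y 0 = 0)
    (hx : ∀ t, x (t + 1) = x t + η * d * (lam - x t * y t))
    (hy : ∀ t, y (t + 1) = y t + η * x t * (lam - x t * y t)) :
    ∀ t, x (t + 1) = x t + (η / 2) *
      (2 * d * lam - (x t) ^ 3 + x t * (∑ i ∈ Finset.range t, (x (i + 1) - x i) ^ 2)) := by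
  have inv : ∀ t, (x t) ^ 2 = 2 * d * y t + ∑ i ∈ Finset.range t, (x (i + 1) - x i) ^ 2 := by
    intro t
    induction t with
    | zero => simp [hx0, hy0]
    | succ t ih =>
      rw [Finset.sum_range_succ, hx t, hy t]
      linear_combination ih
  intro t
  rw [hx t]
  linear_combination (η / 2 * x t) * (inv t)
end

section
/- Let λ, d > 0, let α_∞ > 0, and let ℓ_{α_∞} denote the unique positive root of 2dλ − x³ + α_∞ x. If η ≤ 2/(3 ℓ_{α_∞}²), then the map f(x; α) = x + (η/2)(2dλ − x³ + αx) maps the interval [0, ℓ_{α_∞}] into itself for every α ∈ [0, α_∞], and f(x; α) ≤ f(x′; α′) whenever 0 ≤ x ≤ x′ ≤ ℓ_{α_∞} and 0 ≤ α ≤ α′ ≤ α_∞. -/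
/-- If `η ≤ 2/(3 ℓ_{α∞}²)`, where `ℓ_{α∞}` is the unique positive root of
`2dλ - x³ + α∞ x`, then `f(x; α) = x + (η/2)(2dλ - x³ + αx)` maps `[0, ℓ_{α∞}]`
into itself for every `α ∈ [0, α∞]`, and is jointly monotone:
`f(x; α) ≤ f(x'; α')` whenever `0 ≤ x ≤ x' ≤ ℓ_{α∞}` and `0 ≤ α ≤ α' ≤ α∞`. -/
theorem stmt_5 (lam d η : ℝ) (hlam : 0 < lam) (hd : 0 < d) (hη : 0 < η)
    (αinf : ℝ) (hαinf : 0 < αinf)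
    (ℓ : ℝ) (hℓpos : 0 < ℓ)
    (hℓroot : 2 * d * lam - ℓ ^ 3 + αinf * ℓ = 0)
    (hℓuniq : ∀ z, 0 < z → 2 * d * lam - z ^ 3 + αinf * z = 0 → z = ℓ)
    (hηℓ : η ≤ 2 / (3 * ℓ ^ 2)) :
    (∀ α, 0 ≤ α → α ≤ αinf →
      Set.MapsTo (fun x : ℝ => x + (η / 2) * (2 * d * lam - x ^ 3 + α * x))
        (Set.Icc 0 ℓ) (Set.Icc 0 ℓ)) ∧
    (∀ x x' α α' : ℝ, 0 ≤ x → x ≤ x' → x' ≤ ℓ → 0 ≤ α → α ≤ α' → α' ≤ αinf →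
      x + (η / 2) * (2 * d * lam - x ^ 3 + α * x)
        ≤ x' + (η / 2) * (2 * d * lam - x' ^ 3 + α' * x')) := by
  have hℓ2 : 0 < 3 * ℓ ^ 2 := by positivity
  have hη3 : η * (3 * ℓ ^ 2) ≤ 2 := by
    have := (le_div_iff₀ hℓ2).mp hηℓ
    linarith
  have mono : ∀ x x' α α' : ℝ, 0 ≤ x → x ≤ x' → x' ≤ ℓ → 0 ≤ α → α ≤ α' → α' ≤ αinf →
      x + (η / 2) * (2 * d * lam - x ^ 3 + α * x)
        ≤ x' + (η / 2) * (2 * d * lam - x' ^ 3 + α' * x') := by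
    intro x x' α α' hx hxx' hx'ℓ hα hαα' hα'
    have hx' : 0 ≤ x' := le_trans hx hxx'
    have hsum : x ^ 2 + x * x' + x' ^ 2 ≤ 3 * ℓ ^ 2 := by nlinarith [mul_pos hd hlam]
    have h1 : 0 ≤ (x' - x) * (1 + (η / 2) * (α' - (x ^ 2 + x * x' + x' ^ 2))) := by
      apply mul_nonneg (by linarith)
      nlinarith [mul_nonneg hη.le (le_trans hα hαα')]
    have h2 : 0 ≤ (η / 2) * ((α' - α) * x) := by
      apply mul_nonneg (by linarith)
      exact mul_nonneg (by linarith) hx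
    nlinarith [h1, h2]
  refine ⟨fun α hα hααinf x hxmem => ?_, mono⟩
  obtain ⟨hx0, hxℓ⟩ := hxmem
  constructor
  · have := mono 0 x 0 α le_rfl hx0 hxℓ le_rfl hα hααinf
    simp only at this ⊢
    nlinarith [mul_pos hd hlam]
  · have := mono x ℓ α αinf hx0 hxℓ le_rfl hα hααinf le_rfl
    simp only at this ⊢
    nlinarith [mul_pos hd hlam]
end

section
/- Let λ, d > 0, let (α_t)_{t≥0} be an increasing sequence with 0 ≤ α_t ≤ α_∞ for all t, and let ℓ_{α_∞} be the unique positive root of 2dλ − x³ + α_∞ x. Define x_0 = 0 and x_{t+1} = x_t + (η/2)(2dλ − x_t³ + x_t α_t). If η ≤ 2/(3 ℓ_{α_∞}²), then for every t ≥ 0, 0 ≤ x_t ≤ x_{t+1} ≤ ℓ_{α_∞}; that is, the sequence (x_t) is nonnegative, increasing, and bounded above by ℓ_{α_∞}. -/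
/-- With `(α_t)` increasing, `0 ≤ α_t ≤ α∞`, `x_0 = 0` and
`x_{t+1} = x_t + (η/2)(2dλ - x_t³ + x_t α_t)`, if `η ≤ 2/(3 ℓ_{α∞}²)` then the
sequence `(x_t)` is nonnegative, increasing, and bounded above by `ℓ_{α∞}`. -/
theorem stmt_6 (lam d η : ℝ) (hlam : 0 < lam) (hd : 0 < d) (hη : 0 < η)
    (αinf : ℝ) (α : ℕ → ℝ) (hαmono : Monotone α)
    (hαnonneg : ∀ t, 0 ≤ α t) (hαbd : ∀ t, α t ≤ αinf)
    (ℓ : ℝ) (hℓpos : 0 < ℓ)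
    (hℓroot : 2 * d * lam - ℓ ^ 3 + αinf * ℓ = 0)
    (hℓuniq : ∀ z, 0 < z → 2 * d * lam - z ^ 3 + αinf * z = 0 → z = ℓ)
    (x : ℕ → ℝ) (hx0 : x 0 = 0)
    (hx : ∀ t, x (t + 1) = x t + (η / 2) * (2 * d * lam - (x t) ^ 3 + x t * α t))
    (hηℓ : η ≤ 2 / (3 * ℓ ^ 2)) :
    ∀ t, 0 ≤ x t ∧ x t ≤ x (t + 1) ∧ x (t + 1) ≤ ℓ := by
  have hαinf0 : 0 ≤ αinf := le_trans (hαnonneg 0) (hαbd 0)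
  have hℓ2 : αinf ≤ ℓ ^ 2 := by nlinarith
  have hη3 : η * (3 * ℓ ^ 2) ≤ 2 := by
    have h3 : (0:ℝ) < 3 * ℓ ^ 2 := by positivity
    rw [le_div_iff₀ h3] at hηℓ
    exact hηℓ
  -- main invariant
  have key : ∀ t, 0 ≤ x t ∧ x t ≤ ℓ ∧
      0 ≤ 2 * d * lam - (x t) ^ 3 + x t * α t := by
    intro t
    induction t with
    | zero =>
      refine ⟨by rw [hx0], by rw [hx0]; exact hℓpos.le, ?_⟩
      rw [hx0]
      nlinarith [hαnonneg 0]
    | succ n ih =>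
      obtain ⟨h0, h1, h2⟩ := ih
      have hy' : x (n + 1)
          = x n + η / 2 * (2 * d * lam - (x n) ^ 3 + x n * α n) := hx n
      have hge : x n ≤ x (n + 1) := by
        have := mul_nonneg (by positivity : (0:ℝ) ≤ η / 2) h2
        linarith
      -- upper bound : first factor the αinf-polynomial
      have hf : 2 * d * lam - (x n) ^ 3 + αinf * (x n)
          = (ℓ - x n) * ((x n) ^ 2 + ℓ * (x n) + ℓ ^ 2 - αinf) := by
        linear_combination hℓroot
      have hQ0 : 0 ≤ (x n) ^ 2 + ℓ * (x n) + ℓ ^ 2 - αinf := by nlinarith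
      have hQ3 : (x n) ^ 2 + ℓ * (x n) + ℓ ^ 2 - αinf ≤ 3 * ℓ ^ 2 := by nlinarith
      have hηQ : η / 2 * ((x n) ^ 2 + ℓ * (x n) + ℓ ^ 2 - αinf) ≤ 1 := by
        nlinarith
      have hstep :
          η / 2 * (2 * d * lam - (x n) ^ 3 + x n * α n) ≤ ℓ - x n := by
        have hgf : 2 * d * lam - (x n) ^ 3 + x n * α n
            ≤ 2 * d * lam - (x n) ^ 3 + αinf * (x n) := by
          nlinarith [hαbd n]
        calc η / 2 * (2 * d * lam - (x n) ^ 3 + x n * α n)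
            ≤ η / 2 * (2 * d * lam - (x n) ^ 3 + αinf * (x n)) :=
              mul_le_mul_of_nonneg_left hgf (by positivity)
          _ = (η / 2 * ((x n) ^ 2 + ℓ * (x n) + ℓ ^ 2 - αinf)) * (ℓ - x n) := by
              rw [hf]; ring
          _ ≤ 1 * (ℓ - x n) :=
              mul_le_mul_of_nonneg_right hηQ (by linarith)
          _ = ℓ - x n := one_mul _
      have hup : x (n + 1) ≤ ℓ := by rw [hy']; linarith
      have h0' : 0 ≤ x (n + 1) := le_trans h0 hge
      refine ⟨h0', hup, ?_⟩
      -- the one-step algebraic identity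
      have hid : 2 * d * lam - (x (n + 1)) ^ 3 + x (n + 1) * α n
          = (2 * d * lam - (x n) ^ 3 + x n * α n)
            * (1 - η / 2 * ((x (n + 1)) ^ 2 + x (n + 1) * x n + (x n) ^ 2
              - α n)) := by
        rw [hy']; ring
      have hR : (x (n + 1)) ^ 2 + x (n + 1) * x n + (x n) ^ 2 - α n
          ≤ 3 * ℓ ^ 2 := by
        nlinarith [hαnonneg n, mul_le_mul hup hup h0' hℓpos.le,
          mul_le_mul hup h1 h0 hℓpos.le, mul_le_mul h1 h1 h0 hℓpos.le]
      have hfac : 0 ≤ 1 - η / 2 * ((x (n + 1)) ^ 2 + x (n + 1) * x n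
          + (x n) ^ 2 - α n) := by
        have := mul_le_mul_of_nonneg_left hR (by positivity : (0:ℝ) ≤ η / 2)
        linarith
      have hgn : 0 ≤ 2 * d * lam - (x (n + 1)) ^ 3 + x (n + 1) * α n := by
        rw [hid]; exact mul_nonneg h2 hfac
      have hmono : x (n + 1) * α n ≤ x (n + 1) * α (n + 1) :=
        mul_le_mul_of_nonneg_left (hαmono (Nat.le_succ n)) h0'
      linarith
  intro t
  obtain ⟨h0, h1, h2⟩ := key t
  obtain ⟨_, h1', _⟩ := key (t + 1)
  refine ⟨h0, ?_, h1'⟩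
  have := mul_nonneg (by positivity : (0:ℝ) ≤ η / 2) h2
  rw [hx t]
  linarith
end

section
/- Let λ, d > 0, let (α_t)_{t≥0} be an increasing sequence with 0 ≤ α_t ≤ α_∞ for all t and α_t → α_∞, and let ℓ_{α_∞} be the unique positive root of 2dλ − x³ + α_∞ x. Define x_0 = 0 and x_{t+1} = x_t + (η/2)(2dλ − x_t³ + x_t α_t). If η ≤ 2/(3 ℓ_{α_∞}²), then x_t converges and its limit equals ℓ_{α_∞}. -/
/-- With `(α_t)` increasing, `0 ≤ α_t ≤ α∞`, `α_t → α∞`, `x_0 = 0` and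
`x_{t+1} = x_t + (η/2)(2dλ - x_t³ + x_t α_t)`, if `η ≤ 2/(3 ℓ_{α∞}²)` then `(x_t)`
converges, with limit `ℓ_{α∞}`, the unique positive root of `2dλ - x³ + α∞ x`. -/
theorem stmt_7 (lam d η : ℝ) (hlam : 0 < lam) (hd : 0 < d) (hη : 0 < η)
    (αinf : ℝ) (α : ℕ → ℝ) (hαmono : Monotone α)
    (hαnonneg : ∀ t, 0 ≤ α t) (hαbd : ∀ t, α t ≤ αinf)
    (hαlim : Filter.Tendsto α Filter.atTop (nhds αinf))
    (ℓ : ℝ) (hℓpos : 0 < ℓ)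
    (hℓroot : 2 * d * lam - ℓ ^ 3 + αinf * ℓ = 0)
    (hℓuniq : ∀ z, 0 < z → 2 * d * lam - z ^ 3 + αinf * z = 0 → z = ℓ)
    (x : ℕ → ℝ) (hx0 : x 0 = 0)
    (hx : ∀ t, x (t + 1) = x t + (η / 2) * (2 * d * lam - (x t) ^ 3 + x t * α t))
    (hηℓ : η ≤ 2 / (3 * ℓ ^ 2)) :
    Filter.Tendsto x Filter.atTop (nhds ℓ) := by
  have hℓ2 : (0:ℝ) < 3 * ℓ ^ 2 := by positivity
  have hη3 : η * (3 * ℓ ^ 2) ≤ 2 := by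
    have h := mul_le_mul_of_nonneg_right hηℓ hℓ2.le
    rwa [div_mul_cancel₀] at h
    exact hℓ2.ne'
  have h2d : 2 * d * lam = ℓ ^ 3 - αinf * ℓ := by linarith
  -- the key invariant
  have inv : ∀ t, 0 ≤ x t ∧ x t ≤ ℓ ∧ 0 ≤ 2 * d * lam - (x t) ^ 3 + α t * x t := by
    intro t
    induction t with
    | zero =>
        refine ⟨by simp [hx0], by simp [hx0, hℓpos.le], ?_⟩
        simp only [hx0]
        nlinarith
    | succ n ih =>
        obtain ⟨h0, h1, h2⟩ := ih
        have ha := hαnonneg n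
        have hab := hαbd n
        have hY : x (n + 1) = x n + (η / 2) * (2 * d * lam - (x n) ^ 3 + x n * α n) := hx n
        have hG : 0 ≤ 2 * d * lam - (x n) ^ 3 + x n * α n := by linarith [h2]
        have hYX : x n ≤ x (n + 1) := by rw [hY]; nlinarith
        have hY0 : 0 ≤ x (n + 1) := le_trans h0 hYX
        have hYℓ : x (n + 1) ≤ ℓ := by
          have t1 : 0 ≤ (ℓ - x n) * (2 - η * (ℓ ^ 2 + ℓ * x n + (x n) ^ 2 - α n)) := by
            apply mul_nonneg (by linarith)
            have hσ : ℓ ^ 2 + ℓ * x n + (x n) ^ 2 ≤ 3 * ℓ ^ 2 := by nlinarith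
            nlinarith [mul_le_mul_of_nonneg_left hσ hη.le, mul_nonneg hη.le ha]
          have t2 : 0 ≤ η * ((αinf - α n) * ℓ) := by
            apply mul_nonneg hη.le
            exact mul_nonneg (by linarith) hℓpos.le
          rw [hY, h2d]
          nlinarith [t1, t2]
        refine ⟨hY0, hYℓ, ?_⟩
        have hid : 2 * d * lam - (x (n + 1)) ^ 3 + α n * x (n + 1) =
            (2 * d * lam - (x n) ^ 3 + x n * α n) *
              (2 + η * (α n - ((x (n + 1)) ^ 2 + x n * x (n + 1) + (x n) ^ 2))) / 2 := by
          rw [hY]; ring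
        have hbr : 0 ≤ 2 + η * (α n - ((x (n + 1)) ^ 2 + x n * x (n + 1) + (x n) ^ 2)) := by
          have hσ : (x (n + 1)) ^ 2 + x n * x (n + 1) + (x n) ^ 2 ≤ 3 * ℓ ^ 2 := by nlinarith
          nlinarith [mul_le_mul_of_nonneg_left hσ hη.le, mul_nonneg hη.le ha]
        have hkey : 0 ≤ 2 * d * lam - (x (n + 1)) ^ 3 + α n * x (n + 1) := by
          rw [hid]
          positivity
        have hstep : α n ≤ α (n + 1) := hαmono (Nat.le_succ n)
        linarith [mul_nonneg (sub_nonneg.mpr hstep) hY0, hkey]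
  -- x is monotone and bounded above by ℓ
  have hxmono : Monotone x := by
    apply monotone_nat_of_le_succ
    intro n
    obtain ⟨h0, h1, h2⟩ := inv n
    have hG : 0 ≤ 2 * d * lam - (x n) ^ 3 + x n * α n := by linarith
    rw [hx n]; nlinarith
  have hbdd : BddAbove (Set.range x) := ⟨ℓ, by rintro _ ⟨t, rfl⟩; exact (inv t).2.1⟩
  set L := ⨆ t, x t with hLdef
  have hL : Filter.Tendsto x Filter.atTop (nhds L) := tendsto_atTop_ciSup hxmono hbdd
  -- L is a positive root
  have hx1 : x 1 = η * d * lam := by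
    rw [hx 0, hx0]; ring
  have hLpos : 0 < L := by
    have : x 1 ≤ L := le_ciSup hbdd 1
    rw [hx1] at this
    have hpos : 0 < η * d * lam := by positivity
    linarith
  have h1 : Filter.Tendsto (fun t => x (t + 1)) Filter.atTop (nhds L) :=
    (Filter.tendsto_add_atTop_iff_nat 1).2 hL
  have h1' : Filter.Tendsto
      (fun t => x t + (η / 2) * (2 * d * lam - (x t) ^ 3 + x t * α t))
      Filter.atTop (nhds L) := h1.congr hx
  have h2 : Filter.Tendsto
      (fun t => x t + (η / 2) * (2 * d * lam - (x t) ^ 3 + x t * α t))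
      Filter.atTop (nhds (L + (η / 2) * (2 * d * lam - L ^ 3 + L * αinf))) :=
    hL.add (((tendsto_const_nhds.sub (hL.pow 3)).add (hL.mul hαlim)).const_mul (η / 2))
  have heq : L + (η / 2) * (2 * d * lam - L ^ 3 + L * αinf) = L :=
    tendsto_nhds_unique h2 h1'
  have hroot : 2 * d * lam - L ^ 3 + αinf * L = 0 := by
    have hz : (η / 2) * (2 * d * lam - L ^ 3 + L * αinf) = 0 := by linarith
    have := mul_eq_zero.mp hz
    rcases this with h | h
    · exfalso; linarith
    · linarith [h]
  have : L = ℓ := hℓuniq L hLpos hroot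
  rwa [this] at hL
end

section
/- Let λ, d > 0, P(x, S) = 2dλ − x³ + xS, and S* the unique positive solution of P(x, x) = 0. Then the set R = {(x, S) ∈ ℝ² : x ≥ 0, S ≥ 0, S ≤ x, P(x, S) ≥ 0} is a compact and convex subset of ℝ². -/
/-- Tangent-line lemma: for `x` with `x³ ≥ 2dλ`, every point `(t,s)` of the
region lies above the tangent line to the boundary curve at `x`
(in the form multiplied through by `x²`). -/
lemma stmt_9_tang (lam d x t s : ℝ) (hd : 0 < d) (hlam : 0 < lam)
    (hx : 0 < x) (hx3 : 2 * d * lam ≤ x ^ 3) (ht : 0 ≤ t) (hs : 0 ≤ s)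
    (hmem : 0 ≤ 2 * d * lam - t ^ 3 + t * s) :
    (2 * x ^ 3 + 2 * d * lam) * t - x ^ 4 - 4 * d * lam * x ≤ x ^ 2 * s := by
  rcases le_or_gt (2 * d * lam) (t * x ^ 2) with h | h
  · have ht' : 0 < t := by nlinarith [mul_pos hd hlam, sq_nonneg x]
    nlinarith [mul_nonneg (sq_nonneg (x - t)) (by linarith : (0:ℝ) ≤ t * x ^ 2 - 2 * d * lam),
      mul_nonneg (sq_nonneg x) hmem, ht', sq_nonneg x]
  · have hxx : 0 < x ^ 2 := by positivity
    have hdl : 0 < 2 * d * lam := by positivity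
    nlinarith [mul_nonneg (le_of_lt (by linarith : (0:ℝ) < 2 * d * lam - t * x ^ 2))
        (by nlinarith : (0:ℝ) ≤ 2 * x ^ 3 + 2 * d * lam),
      mul_nonneg (by linarith : (0:ℝ) ≤ x ^ 3 - 2 * d * lam)
        (by nlinarith : (0:ℝ) ≤ x ^ 3 + 2 * d * lam),
      mul_nonneg hs hxx.le, hxx]

/-- The set `R = {(x, S) ∈ ℝ²_{≥0} : S ≤ x, P(x, S) ≥ 0}`, with
`P(x, S) = 2dλ − x³ + xS`, is a compact and convex subset of `ℝ²`. -/
theorem stmt_9 (lam d : ℝ) (hlam : 0 < lam) (hd : 0 < d)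
    (Sstar : ℝ) (hSstar : 0 < Sstar)
    (hSstarroot : 2 * d * lam - Sstar ^ 3 + Sstar * Sstar = 0)
    (hSstaruniq : ∀ z, 0 < z → 2 * d * lam - z ^ 3 + z * z = 0 → z = Sstar) :
    IsCompact {p : ℝ × ℝ | 0 ≤ p.1 ∧ 0 ≤ p.2 ∧ p.2 ≤ p.1 ∧
        0 ≤ 2 * d * lam - p.1 ^ 3 + p.1 * p.2} ∧
    Convex ℝ {p : ℝ × ℝ | 0 ≤ p.1 ∧ 0 ≤ p.2 ∧ p.2 ≤ p.1 ∧
        0 ≤ 2 * d * lam - p.1 ^ 3 + p.1 * p.2} := by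
  set R := {p : ℝ × ℝ | 0 ≤ p.1 ∧ 0 ≤ p.2 ∧ p.2 ≤ p.1 ∧
      0 ≤ 2 * d * lam - p.1 ^ 3 + p.1 * p.2} with hR
  constructor
  · -- compactness
    have hclosed : IsClosed R := by
      have : R = {p : ℝ × ℝ | 0 ≤ p.1} ∩ ({p : ℝ × ℝ | 0 ≤ p.2} ∩
          ({p : ℝ × ℝ | p.2 ≤ p.1} ∩
            {p : ℝ × ℝ | 0 ≤ 2 * d * lam - p.1 ^ 3 + p.1 * p.2})) := rfl
      rw [this]
      refine (isClosed_le continuous_const continuous_fst).inter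
        ((isClosed_le continuous_const continuous_snd).inter
          ((isClosed_le continuous_snd continuous_fst).inter
            (isClosed_le continuous_const ?_)))
      fun_prop
    have hsub : R ⊆ Set.Icc (0:ℝ) (2 * d * lam + 2) ×ˢ Set.Icc (0:ℝ) (2 * d * lam + 2) := by
      rintro p ⟨h1, h2, h3, h4⟩
      have hxM : p.1 ≤ 2 * d * lam + 2 := by
        by_contra hc
        push_neg at hc
        have hmul : p.1 * p.2 ≤ p.1 * p.1 := by nlinarith
        nlinarith [mul_pos hd hlam, sq_nonneg p.1]
      exact ⟨⟨h1, hxM⟩, h2, h3.trans hxM⟩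
    exact (isCompact_Icc.prod isCompact_Icc).of_isClosed_subset hclosed hsub
  · -- convexity
    rintro p ⟨hp1, hp2, hp3, hp4⟩ q ⟨hq1, hq2, hq3, hq4⟩ a b ha hb hab
    have hx : 0 ≤ a * p.1 + b * q.1 := by positivity
    have hS : 0 ≤ a * p.2 + b * q.2 := by positivity
    have hSx : a * p.2 + b * q.2 ≤ a * p.1 + b * q.1 := by
      have := mul_le_mul_of_nonneg_left hp3 ha
      have := mul_le_mul_of_nonneg_left hq3 hb
      linarith
    refine ⟨by simpa using hx, by simpa using hS, by simpa using hSx, ?_⟩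
    have hfst : (a • p + b • q).1 = a * p.1 + b * q.1 := rfl
    have hsnd : (a • p + b • q).2 = a * p.2 + b * q.2 := rfl
    rw [hfst, hsnd]
    set x := a * p.1 + b * q.1 with hxdef
    set S := a * p.2 + b * q.2 with hSdef
    rcases le_or_gt (x ^ 3) (2 * d * lam) with hcase | hcase
    · nlinarith [mul_nonneg hx hS]
    · have hxpos : 0 < x := by
        rcases hx.lt_or_eq with h | h
        · exact h
        · exfalso; rw [← h] at hcase; nlinarith [mul_pos hd hlam]
      have t1 := stmt_9_tang lam d x p.1 p.2 hd hlam hxpos hcase.le hp1 hp2 hp4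
      have t2 := stmt_9_tang lam d x q.1 q.2 hd hlam hxpos hcase.le hq1 hq2 hq4
      have ha1 := mul_le_mul_of_nonneg_left t1 ha
      have ha2 := mul_le_mul_of_nonneg_left t2 hb
      -- summing: x^4 - 2dλ x ≤ x² S, then divide by x
      have hb' : b = 1 - a := by linarith
      have e1 : a * ((2 * x ^ 3 + 2 * d * lam) * p.1 - x ^ 4 - 4 * d * lam * x)
          + b * ((2 * x ^ 3 + 2 * d * lam) * q.1 - x ^ 4 - 4 * d * lam * x)
          = x ^ 4 - 2 * d * lam * x := by rw [hxdef, hb']; ring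
      have e2 : a * (x ^ 2 * p.2) + b * (x ^ 2 * q.2) = x ^ 2 * S := by
        rw [hSdef]; ring
      have hkey : x ^ 4 - 2 * d * lam * x ≤ x ^ 2 * S := by
        rw [← e1, ← e2]; exact add_le_add ha1 ha2
      have h7 : x * (x ^ 3 - 2 * d * lam) ≤ x * (x * S) := by
        have e3 : x * (x ^ 3 - 2 * d * lam) = x ^ 4 - 2 * d * lam * x := by ring
        have e4 : x * (x * S) = x ^ 2 * S := by ring
        rw [e3, e4]; exact hkey
      have h8 := le_of_mul_le_mul_left h7 hxpos
      linarith
end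

section
/- Let λ, d > 0, P(x, S) = 2dλ − x³ + xS, S* the unique positive solution of P(x, x) = 0, R = {(x, S) ∈ ℝ²_{≥0} : S ≤ x, P(x, S) ≥ 0}, and suppose the step size satisfies η < min{2/(3(S*+1)²), 2/max_{(x,S)∈R} P(x, S)}. Define the sequence (x_t, S_t) by x_0 = S_0 = 0, x_{t+1} = x_t + (η/2) P(x_t, S_t), S_{t+1} = S_t + (η²/4) P(x_t, S_t)². Then (x_t, S_t) ∈ R for every t ≥ 0; in particular S_t ≤ x_t and P(x_t, S_t) ≥ 0 for all t, and the sequence is bounded. -/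
/-- With `P(x, S) = 2dλ − x³ + xS`, `S*` the unique positive solution of `P(x, x) = 0`,
`R = {(x, S) ∈ ℝ²_{≥0} : S ≤ x, P(x, S) ≥ 0}`, and step size
`η < min{2/(3(S*+1)²), 2/max_R P}`, the sequence defined by `x_0 = S_0 = 0`,
`x_{t+1} = x_t + (η/2) P(x_t, S_t)`, `S_{t+1} = S_t + (η²/4) P(x_t, S_t)²`
stays in `R` for all `t` (in particular `S_t ≤ x_t` and `P(x_t, S_t) ≥ 0`), and is bounded. -/
theorem stmt_12 (lam d η : ℝ) (hlam : 0 < lam) (hd : 0 < d) (hη : 0 < η)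
    (Sstar : ℝ) (hSstar : 0 < Sstar)
    (hSstarroot : 2 * d * lam - Sstar ^ 3 + Sstar * Sstar = 0)
    (hSstaruniq : ∀ z, 0 < z → 2 * d * lam - z ^ 3 + z * z = 0 → z = Sstar)
    (Pmax : ℝ)
    (hPmax : IsGreatest ((fun p : ℝ × ℝ => 2 * d * lam - p.1 ^ 3 + p.1 * p.2) ''
      {p : ℝ × ℝ | 0 ≤ p.1 ∧ 0 ≤ p.2 ∧ p.2 ≤ p.1 ∧
        0 ≤ 2 * d * lam - p.1 ^ 3 + p.1 * p.2}) Pmax)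
    (hηbound : η < min (2 / (3 * (Sstar + 1) ^ 2)) (2 / Pmax))
    (x S : ℕ → ℝ) (hx0 : x 0 = 0) (hS0 : S 0 = 0)
    (hx : ∀ t, x (t + 1) = x t + (η / 2) * (2 * d * lam - (x t) ^ 3 + x t * S t))
    (hS : ∀ t, S (t + 1) = S t + (η ^ 2 / 4) * (2 * d * lam - (x t) ^ 3 + x t * S t) ^ 2) :
    (∀ t, (x t, S t) ∈ {p : ℝ × ℝ | 0 ≤ p.1 ∧ 0 ≤ p.2 ∧ p.2 ≤ p.1 ∧
        0 ≤ 2 * d * lam - p.1 ^ 3 + p.1 * p.2}) ∧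
    (∀ t, S t ≤ x t ∧ 0 ≤ 2 * d * lam - (x t) ^ 3 + x t * S t) ∧
    Bornology.IsBounded (Set.range fun t => ((x t, S t) : ℝ × ℝ)) := by
  have hdl : 0 < 2 * d * lam := by positivity
  -- Sstar > 1
  have hS1 : 1 < Sstar := by nlinarith [sq_nonneg Sstar]
  -- Pmax > 0
  have hPmaxpos : 0 < Pmax := by
    have hmem : (2 * d * lam : ℝ) ∈ ((fun p : ℝ × ℝ => 2 * d * lam - p.1 ^ 3 + p.1 * p.2) ''
        {p : ℝ × ℝ | 0 ≤ p.1 ∧ 0 ≤ p.2 ∧ p.2 ≤ p.1 ∧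
          0 ≤ 2 * d * lam - p.1 ^ 3 + p.1 * p.2}) := by
      refine ⟨((0 : ℝ), (0 : ℝ)), ⟨le_refl _, le_refl _, le_refl _, by norm_num; positivity⟩, by norm_num⟩
    exact lt_of_lt_of_le hdl (hPmax.2 hmem)
  have hη1 : η < 2 / (3 * (Sstar + 1) ^ 2) := lt_of_lt_of_le hηbound (min_le_left _ _)
  have hη2 : η < 2 / Pmax := lt_of_lt_of_le hηbound (min_le_right _ _)
  have hηP : η * Pmax < 2 := by
    rw [lt_div_iff₀ hPmaxpos] at hη2; linarith
  have hηS : η * (3 * (Sstar + 1) ^ 2) < 2 := by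
    have hpos : 0 < 3 * (Sstar + 1) ^ 2 := by positivity
    rw [lt_div_iff₀ hpos] at hη1; linarith
  -- anything in R has x-coordinate ≤ Sstar
  have hxle : ∀ a b : ℝ, 0 ≤ a → b ≤ a → 0 ≤ 2 * d * lam - a ^ 3 + a * b → a ≤ Sstar := by
    intro a b ha hba hP
    by_contra hc
    push_neg at hc
    have h1 : 0 < a ^ 2 + a * Sstar + Sstar ^ 2 - a - Sstar := by nlinarith
    nlinarith [mul_pos (sub_pos.mpr hc) h1]
  -- invariant
  have hinv : ∀ t, 0 ≤ x t ∧ 0 ≤ S t ∧ S t ≤ x t ∧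
      0 ≤ 2 * d * lam - (x t) ^ 3 + x t * S t := by
    intro t
    induction t with
    | zero =>
      refine ⟨by rw [hx0], by rw [hS0], by rw [hx0, hS0], ?_⟩
      rw [hx0, hS0]; norm_num; positivity
    | succ t ih =>
      obtain ⟨hx0t, hS0t, hSx, hP⟩ := ih
      obtain ⟨P, hPdef⟩ : ∃ P : ℝ, P = 2 * d * lam - (x t) ^ 3 + x t * S t := ⟨_, rfl⟩
      rw [← hPdef] at hP
      have hxS : x t ≤ Sstar := hxle _ _ hx0t hSx (hPdef ▸ hP)
      have hPle : P ≤ Pmax := by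
        rw [hPdef]
        exact hPmax.2 ⟨(x t, S t), ⟨hx0t, hS0t, hSx, by rw [hPdef] at hP; exact hP⟩, rfl⟩
      have hηPlt : η * P < 2 := by nlinarith
      obtain ⟨h, hhdef⟩ : ∃ h : ℝ, h = η / 2 * P := ⟨_, rfl⟩
      have hh0 : 0 ≤ h := hhdef ▸ mul_nonneg (by positivity) hP
      have hh1 : h < 1 := by
        have e : h = η * P / 2 := by rw [hhdef]; ring
        linarith
      have hxeq : x (t + 1) = x t + h := by rw [hx t, hhdef, hPdef]
      have hSeq : S (t + 1) = S t + h ^ 2 := by rw [hS t, hhdef, hPdef]; ring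
      refine ⟨?_, ?_, ?_, ?_⟩
      · rw [hxeq]; linarith
      · rw [hSeq]; nlinarith
      · rw [hxeq, hSeq]; nlinarith
      · rw [hxeq, hSeq]
        have hid : 2 * d * lam - (x t + h) ^ 3 + (x t + h) * (S t + h ^ 2)
            = P - h * (3 * (x t) ^ 2 - S t + 2 * x t * h) := by
          rw [hPdef]; ring
        rw [hid]
        have hxh : x t * h ≤ Sstar := by
          calc x t * h ≤ Sstar * 1 := by
                exact mul_le_mul hxS hh1.le hh0 (by linarith)
            _ = Sstar := mul_one _
        have hx2 : (x t) ^ 2 ≤ Sstar ^ 2 := by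
          exact pow_le_pow_left₀ hx0t hxS 2
        have hb : 3 * (x t) ^ 2 - S t + 2 * x t * h ≤ 3 * (Sstar + 1) ^ 2 := by
          have e : 3 * (Sstar + 1) ^ 2 = 3 * Sstar ^ 2 + 6 * Sstar + 3 := by ring
          linarith
        have h1 : h * (3 * (x t) ^ 2 - S t + 2 * x t * h) ≤ h * (3 * (Sstar + 1) ^ 2) :=
          mul_le_mul_of_nonneg_left hb hh0
        have h2 : h * (3 * (Sstar + 1) ^ 2) ≤ P := by
          have e : h * (3 * (Sstar + 1) ^ 2) = η * (3 * (Sstar + 1) ^ 2) * P / 2 := by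
            rw [hhdef]; ring
          have h3 : η * (3 * (Sstar + 1) ^ 2) * P ≤ 2 * P :=
            mul_le_mul_of_nonneg_right hηS.le hP
          linarith
        linarith
  refine ⟨fun t => (hinv t), fun t => ⟨(hinv t).2.2.1, (hinv t).2.2.2⟩, ?_⟩
  apply (Metric.isBounded_closedBall (x := ((0 : ℝ), (0 : ℝ))) (r := Sstar)).subset
  rintro p ⟨t, rfl⟩
  obtain ⟨h1, h2, h3, h4⟩ := hinv t
  have hxS : x t ≤ Sstar := hxle _ _ h1 h3 h4
  simp only [Metric.mem_closedBall]
  rw [Prod.dist_eq]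
  simp only [Real.dist_eq, sub_zero]
  exact max_le (by rw [abs_of_nonneg h1]; exact hxS)
    (by rw [abs_of_nonneg h2]; linarith)
end

section
/- Let λ, d > 0, P(x, S) = 2dλ − x³ + xS, S* the unique positive solution of P(x, x) = 0, R = {(x, S) ∈ ℝ²_{≥0} : S ≤ x, P(x, S) ≥ 0}, and suppose η < min{2/(3(S*+1)²), 2/max_{(x,S)∈R} P(x, S)}. Define x_0 = S_0 = 0, x_{t+1} = x_t + (η/2) P(x_t, S_t), S_{t+1} = S_t + (η²/4) P(x_t, S_t)². Then the increasing bounded sequence (S_t) converges to some S_∞ ≥ 0, and x_t converges to ℓ_{S_∞}, the unique positive root of P(·, S_∞). -/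
set_option maxHeartbeats 2000000 in
/-- Under the step-size bound, the increasing bounded sequence `(S_t)` converges to
some `S_∞ ≥ 0`, and `(x_t)` converges to `ℓ_{S_∞}`, the unique positive root of
`P(·, S_∞)`, where `P(x, S) = 2dλ − x³ + xS`. -/
theorem stmt_13 (lam d η : ℝ) (hlam : 0 < lam) (hd : 0 < d) (hη : 0 < η)
    (Sstar : ℝ) (hSstar : 0 < Sstar)
    (hSstarroot : 2 * d * lam - Sstar ^ 3 + Sstar * Sstar = 0)
    (hSstaruniq : ∀ z, 0 < z → 2 * d * lam - z ^ 3 + z * z = 0 → z = Sstar)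
    (Pmax : ℝ)
    (hPmax : IsGreatest ((fun p : ℝ × ℝ => 2 * d * lam - p.1 ^ 3 + p.1 * p.2) ''
      {p : ℝ × ℝ | 0 ≤ p.1 ∧ 0 ≤ p.2 ∧ p.2 ≤ p.1 ∧
        0 ≤ 2 * d * lam - p.1 ^ 3 + p.1 * p.2}) Pmax)
    (hηbound : η < min (2 / (3 * (Sstar + 1) ^ 2)) (2 / Pmax))
    (ℓ : ℝ → ℝ)
    (hℓpos : ∀ s, 0 ≤ s → 0 < ℓ s)
    (hℓroot : ∀ s, 0 ≤ s → 2 * d * lam - (ℓ s) ^ 3 + ℓ s * s = 0)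
    (hℓuniq : ∀ s, 0 ≤ s → ∀ z, 0 < z → 2 * d * lam - z ^ 3 + z * s = 0 → z = ℓ s)
    (x S : ℕ → ℝ) (hx0 : x 0 = 0) (hS0 : S 0 = 0)
    (hx : ∀ t, x (t + 1) = x t + (η / 2) * (2 * d * lam - (x t) ^ 3 + x t * S t))
    (hS : ∀ t, S (t + 1) = S t + (η ^ 2 / 4) * (2 * d * lam - (x t) ^ 3 + x t * S t) ^ 2) :
    ∃ Sinf : ℝ, 0 ≤ Sinf ∧ Filter.Tendsto S Filter.atTop (nhds Sinf) ∧
      Filter.Tendsto x Filter.atTop (nhds (ℓ Sinf)) := by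
  have hdl : 0 < 2 * d * lam := by positivity
  have hS1 : 1 < Sstar := by nlinarith [sq_nonneg Sstar]
  -- Pmax bounds
  have hPmaxpos : 0 < Pmax := by
    have h0 : (2 * d * lam : ℝ) ∈ ((fun p : ℝ × ℝ => 2 * d * lam - p.1 ^ 3 + p.1 * p.2) ''
      {p : ℝ × ℝ | 0 ≤ p.1 ∧ 0 ≤ p.2 ∧ p.2 ≤ p.1 ∧
        0 ≤ 2 * d * lam - p.1 ^ 3 + p.1 * p.2}) := by
      refine ⟨(0, 0), ?_, by norm_num⟩
      simp [Set.mem_setOf_eq]; positivity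
    exact lt_of_lt_of_le hdl (hPmax.2 h0)
  have hηP : η * Pmax < 2 := by
    have := (lt_min_iff.mp hηbound).2
    calc η * Pmax < (2 / Pmax) * Pmax := by nlinarith
    _ = 2 := by field_simp
  have hηS : 3 * η * (Sstar + 1) ^ 2 < 2 := by
    have h := (lt_min_iff.mp hηbound).1
    have hpos : (0:ℝ) < 3 * (Sstar + 1) ^ 2 := by positivity
    calc 3 * η * (Sstar + 1) ^ 2 = η * (3 * (Sstar + 1)^2) := by ring
    _ < (2 / (3 * (Sstar + 1) ^ 2)) * (3 * (Sstar + 1)^2) := by nlinarith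
    _ = 2 := by field_simp
  have hηS3 : 3 * η * Sstar ^ 2 < 2 := by nlinarith [hSstar.le]
  -- the invariant
  have inv : ∀ t, 0 ≤ S t ∧ S t ≤ x t ∧
      0 ≤ 2 * d * lam - (x t) ^ 3 + x t * S t ∧ x t ≤ Sstar := by
    intro t
    induction t with
    | zero => refine ⟨by rw [hS0], by rw [hS0, hx0], by rw [hS0, hx0]; nlinarith, by rw [hx0]; linarith⟩
    | succ t ih =>
      obtain ⟨h1, h2, h3, h4⟩ := ih
      have hx0' : 0 ≤ x t := h1.trans h2
      set p := 2 * d * lam - (x t) ^ 3 + x t * S t with hp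
      set L := ℓ (S t) with hL
      have hLpos : 0 < L := hℓpos _ h1
      have hLroot : 2 * d * lam - L ^ 3 + L * S t = 0 := hℓroot _ h1
      have hSL2 : S t < L ^ 2 := by nlinarith
      have efac : p = (x t - L) * (S t - ((x t)^2 + x t * L + L^2)) := by
        linear_combination hLroot
      have hxL : x t ≤ L := by
        by_contra hc
        push_neg at hc
        have h5 : 0 < ((x t)^2 + x t * L + L^2) - S t := by
          nlinarith [mul_nonneg hx0' hLpos.le, sq_nonneg (x t)]
        have := mul_pos (sub_pos.2 hc) h5
        nlinarith [efac]
      have hLS : L ≤ Sstar := by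
        by_contra hc
        push_neg at hc
        have hSle : S t ≤ Sstar := h2.trans h4
        have e1 : 2*d*lam - Sstar^3 + Sstar * S t
            = (Sstar - L) * (S t - (Sstar^2 + Sstar*L + L^2)) := by
          linear_combination hLroot
        have e2 : 2*d*lam - Sstar^3 + Sstar * S t = Sstar * (S t - Sstar) := by
          linear_combination hSstarroot
        have h5 : 0 < (Sstar^2 + Sstar*L + L^2) - S t := by
          nlinarith [mul_pos hSstar hLpos, sq_nonneg Sstar]
        have h6 := mul_pos (sub_pos.2 hc) h5
        have h7 : 0 ≤ Sstar * (Sstar - S t) := mul_nonneg hSstar.le (by linarith)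
        nlinarith [e1, e2]
      -- p ≤ Pmax
      have hpPmax : p ≤ Pmax := hPmax.2 ⟨(x t, S t), ⟨hx0', h1, h2, h3⟩, rfl⟩
      have hstep : η / 2 * p < 1 := by
        nlinarith [mul_le_mul_of_nonneg_left hpPmax hη.le]
      have hX : x (t + 1) = x t + (η / 2) * p := hx t
      have hSs : S (t + 1) = S t + (η ^ 2 / 4) * p ^ 2 := hS t
      have hS'ge : S t ≤ S (t + 1) := by rw [hSs]; nlinarith [sq_nonneg p]
      have hx'ge : x t ≤ x (t + 1) := by rw [hX]; nlinarith
      have hx'0 : 0 ≤ x (t + 1) := hx0'.trans hx'ge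
      -- x (t+1) ≤ L
      have hx'L : x (t + 1) ≤ L := by
        rw [hX]
        have hfac : x t + η / 2 * p - L
            = (x t - L) * (1 + (η / 2) * (S t - ((x t)^2 + x t * L + L^2))) := by
          rw [efac]; ring
        have hbr : 0 ≤ 1 + (η / 2) * (S t - ((x t)^2 + x t * L + L^2)) := by
          have hxS : x t ≤ Sstar := hxL.trans hLS
          have b1 : (x t)^2 ≤ Sstar^2 := by nlinarith
          have b2 : L^2 ≤ Sstar^2 := by nlinarith [hLpos.le]
          have b3 : x t * L ≤ Sstar^2 := by nlinarith [hLpos.le]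
          nlinarith [hηS3, h1, hη.le]
        nlinarith [mul_nonpos_of_nonpos_of_nonneg (sub_nonpos.2 hxL) hbr]
      -- P(x(t+1), S t) ≥ 0
      have hPx' : 0 ≤ 2 * d * lam - (x (t+1)) ^ 3 + x (t+1) * S t := by
        have hfac : 2 * d * lam - (x (t+1)) ^ 3 + x (t+1) * S t
            = (x (t+1) - L) * (S t - ((x (t+1))^2 + x (t+1) * L + L^2)) := by
          linear_combination hLroot
        rw [hfac]
        have h5 : S t - ((x (t+1))^2 + x (t+1) * L + L^2) ≤ 0 := by
          nlinarith [sq_nonneg (x (t+1)), mul_nonneg hx'0 hLpos.le]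
        nlinarith [mul_nonneg (neg_nonneg.2 (sub_nonpos.2 hx'L)) (neg_nonneg.2 h5)]
      refine ⟨h1.trans hS'ge, ?_, ?_, hx'L.trans hLS⟩
      · rw [hX, hSs]
        nlinarith [mul_nonneg (mul_nonneg (le_of_lt hη) h3) (sub_nonneg.2 hstep.le)]
      · have : 0 ≤ x (t+1) * (S (t+1) - S t) := mul_nonneg hx'0 (by linarith)
        nlinarith [hPx']
  -- monotonicity and bounds
  have monoS : Monotone S := monotone_nat_of_le_succ (fun t => by
    rw [hS t]; nlinarith [sq_nonneg (2 * d * lam - (x t) ^ 3 + x t * S t), sq_nonneg η])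
  have monoX : Monotone x := monotone_nat_of_le_succ (fun t => by
    rw [hx t]; nlinarith [(inv t).2.2.1])
  have bddS : BddAbove (Set.range S) := ⟨Sstar, by
    rintro _ ⟨t, rfl⟩; exact (inv t).2.1.trans (inv t).2.2.2⟩
  have bddX : BddAbove (Set.range x) := ⟨Sstar, by
    rintro _ ⟨t, rfl⟩; exact (inv t).2.2.2⟩
  set Sinf := ⨆ t, S t with hSinf
  set xinf := ⨆ t, x t with hxinf
  have htS : Filter.Tendsto S Filter.atTop (nhds Sinf) := tendsto_atTop_ciSup monoS bddS
  have htX : Filter.Tendsto x Filter.atTop (nhds xinf) := tendsto_atTop_ciSup monoX bddX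
  have hSinf0 : 0 ≤ Sinf := by
    have := le_ciSup bddS 0
    rw [hS0] at this; exact this
  have hxinfpos : 0 < xinf := by
    have h1 : x 1 = η / 2 * (2 * d * lam) := by
      rw [hx 0, hx0, hS0]; ring
    have := le_ciSup bddX 1
    rw [h1] at this; nlinarith
  -- the limit of P along the trajectory
  have htP : Filter.Tendsto (fun t => 2 * d * lam - (x t) ^ 3 + x t * S t)
      Filter.atTop (nhds (2 * d * lam - xinf ^ 3 + xinf * Sinf)) := by
    exact ((tendsto_const_nhds.sub (htX.pow 3)).add (htX.mul htS))
  have htP0 : Filter.Tendsto (fun t => 2 * d * lam - (x t) ^ 3 + x t * S t)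
      Filter.atTop (nhds 0) := by
    have hshift : Filter.Tendsto (fun t => x (t + 1)) Filter.atTop (nhds xinf) :=
      htX.comp (Filter.tendsto_add_atTop_nat 1)
    have h1 : Filter.Tendsto (fun t => (2 / η) * (x (t + 1) - x t)) Filter.atTop
        (nhds ((2 / η) * (xinf - xinf))) := (hshift.sub htX).const_mul _
    have heq : (fun t => (2 / η) * (x (t + 1) - x t))
        = fun t => 2 * d * lam - (x t) ^ 3 + x t * S t := by
      funext t
      rw [hx t]
      field_simp
      ring
    rw [heq] at h1
    simpa using h1
  have hroot : 2 * d * lam - xinf ^ 3 + xinf * Sinf = 0 :=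
    tendsto_nhds_unique htP htP0
  have : xinf = ℓ Sinf := hℓuniq Sinf hSinf0 xinf hxinfpos hroot
  exact ⟨Sinf, hSinf0, htS, this ▸ htX⟩
end

section
/- Let λ, d > 0, P(x, S) = 2dλ − x³ + xS, S* the unique positive solution of P(x, x) = 0, R = {(x, S) ∈ ℝ²_{≥0} : S ≤ x, P(x, S) ≥ 0}, and suppose η < min{2/(3(S*+1)²), 2/max_{(x,S)∈R} P(x, S)}. Let x_0 = S_0 = 0, x_{t+1} = x_t + (η/2) P(x_t, S_t), S_{t+1} = S_t + (η²/4) P(x_t, S_t)², let S_∞ = lim_t S_t, and let M = ((S*)² + S* ℓ_{S_∞} + (2dλ)^{2/3})/2. Then for every t ≥ 0, x_{t+1} − x_t ≤ η M (ℓ_{S_t} − x_t). -/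
/-- If `0 ≤ S ≤ x` and `P(x,S) ≥ 0` then `x ≤ Sstar`. -/
lemma aux_xle (A Sb xx SS : ℝ) (hSb1 : 1 < Sb) (hroot : A - Sb ^ 3 + Sb * Sb = 0)
    (hS0 : 0 ≤ SS) (hSx : SS ≤ xx) (hP : 0 ≤ A - xx ^ 3 + xx * SS) : xx ≤ Sb := by
  by_contra h
  push_neg at h
  have hx0 : 0 ≤ xx := hS0.trans hSx
  have hq : 0 ≤ A - xx ^ 3 + xx * xx := by
    nlinarith [mul_nonneg hx0 (sub_nonneg.2 hSx)]
  have hfac : (0:ℝ) < xx ^ 2 + xx * Sb + Sb ^ 2 - xx - Sb := by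
    nlinarith [mul_pos (show (0:ℝ) < xx by linarith) (show (0:ℝ) < xx - 1 by linarith),
      mul_pos (show (0:ℝ) < Sb by linarith) (show (0:ℝ) < Sb - 1 by linarith),
      mul_pos (show (0:ℝ) < xx by linarith) (show (0:ℝ) < Sb by linarith)]
  nlinarith [mul_pos (sub_pos.2 h) hfac]

/-- The preservation of `P ≥ 0` under one gradient step. -/
lemma aux_step (A η Sb xx SS : ℝ) (hη : 0 < η) (hS0 : 0 ≤ SS) (hSx : SS ≤ xx)
    (hP : 0 ≤ A - xx ^ 3 + xx * SS) (hxb : xx ≤ Sb)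
    (hηK : η * (3 * (Sb + 1) ^ 2) < 2) (hηp : η * (A - xx ^ 3 + xx * SS) < 2) :
    0 ≤ A - (xx + η / 2 * (A - xx ^ 3 + xx * SS)) ^ 3
      + (xx + η / 2 * (A - xx ^ 3 + xx * SS)) * (SS + η ^ 2 / 4 * (A - xx ^ 3 + xx * SS) ^ 2) := by
  set p := A - xx ^ 3 + xx * SS with hp
  have key : A - (xx + η / 2 * p) ^ 3 + (xx + η / 2 * p) * (SS + η ^ 2 / 4 * p ^ 2)
      = p - (η / 2 * p) * (3 * xx ^ 2 + 2 * xx * (η / 2 * p) - SS) := by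
    rw [hp]; ring
  have hx0 : 0 ≤ xx := hS0.trans hSx
  have ha0 : 0 ≤ η / 2 * p := mul_nonneg (by linarith) hP
  have ha1 : η / 2 * p ≤ 1 := by nlinarith
  have h1 : xx * (η / 2 * p) ≤ xx * 1 := mul_le_mul_of_nonneg_left ha1 hx0
  have h2 : xx ^ 2 ≤ Sb ^ 2 := by nlinarith
  have hb : 3 * xx ^ 2 + 2 * xx * (η / 2 * p) - SS ≤ 3 * (Sb + 1) ^ 2 := by nlinarith
  have h3 : (η / 2 * p) * (3 * xx ^ 2 + 2 * xx * (η / 2 * p) - SS)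
      ≤ (η / 2 * p) * (3 * (Sb + 1) ^ 2) := mul_le_mul_of_nonneg_left hb ha0
  have h4 : (η / 2 * p) * (3 * (Sb + 1) ^ 2) ≤ p := by
    nlinarith [mul_nonneg hP (show (0:ℝ) ≤ 2 - η * (3 * (Sb + 1) ^ 2) by linarith)]
  rw [key]
  linarith

set_option maxHeartbeats 1000000 in
/-- Under the step-size bound, with `M = ((S*)² + S* ℓ_{S_∞} + (2dλ)^{2/3})/2`,
for every `t ≥ 0`: `x_{t+1} − x_t ≤ η M (ℓ_{S_t} − x_t)`. -/
theorem stmt_16 (lam d η : ℝ) (hlam : 0 < lam) (hd : 0 < d) (hη : 0 < η)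
    (Sstar : ℝ) (hSstar : 0 < Sstar)
    (hSstarroot : 2 * d * lam - Sstar ^ 3 + Sstar * Sstar = 0)
    (hSstaruniq : ∀ z, 0 < z → 2 * d * lam - z ^ 3 + z * z = 0 → z = Sstar)
    (Pmax : ℝ)
    (hPmax : IsGreatest ((fun p : ℝ × ℝ => 2 * d * lam - p.1 ^ 3 + p.1 * p.2) ''
      {p : ℝ × ℝ | 0 ≤ p.1 ∧ 0 ≤ p.2 ∧ p.2 ≤ p.1 ∧
        0 ≤ 2 * d * lam - p.1 ^ 3 + p.1 * p.2}) Pmax)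
    (hηbound : η < min (2 / (3 * (Sstar + 1) ^ 2)) (2 / Pmax))
    (ℓ : ℝ → ℝ)
    (hℓpos : ∀ s, 0 ≤ s → 0 < ℓ s)
    (hℓroot : ∀ s, 0 ≤ s → 2 * d * lam - (ℓ s) ^ 3 + ℓ s * s = 0)
    (hℓuniq : ∀ s, 0 ≤ s → ∀ z, 0 < z → 2 * d * lam - z ^ 3 + z * s = 0 → z = ℓ s)
    (x S : ℕ → ℝ) (hx0 : x 0 = 0) (hS0 : S 0 = 0)
    (hx : ∀ t, x (t + 1) = x t + (η / 2) * (2 * d * lam - (x t) ^ 3 + x t * S t))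
    (hS : ∀ t, S (t + 1) = S t + (η ^ 2 / 4) * (2 * d * lam - (x t) ^ 3 + x t * S t) ^ 2)
    (Sinf : ℝ) (hSinf : Filter.Tendsto S Filter.atTop (nhds Sinf)) :
    ∀ t, x (t + 1) - x t ≤
      η * ((Sstar ^ 2 + Sstar * ℓ Sinf + (2 * d * lam) ^ ((2 : ℝ) / 3)) / 2)
        * (ℓ (S t) - x t) := by
  obtain ⟨hη1, hη2⟩ := lt_min_iff.mp hηbound
  have hdl : (0:ℝ) < 2 * d * lam := by positivity
  have hS1 : 1 < Sstar := by nlinarith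
  -- Pmax is positive
  have hPmaxge : 2 * d * lam ≤ Pmax := by
    have := hPmax.2 ⟨(0, 0), ⟨le_refl 0, le_refl 0, le_refl 0, by norm_num; linarith⟩, rfl⟩
    simpa using this
  have hPmaxpos : 0 < Pmax := lt_of_lt_of_le hdl hPmaxge
  have hηP : η * Pmax < 2 := (lt_div_iff₀ hPmaxpos).mp hη2
  have hKpos : (0:ℝ) < 3 * (Sstar + 1) ^ 2 := by positivity
  have hηK : η * (3 * (Sstar + 1) ^ 2) < 2 := (lt_div_iff₀ hKpos).mp hη1
  -- ℓ facts
  have hℓsq : ∀ s, 0 ≤ s → s < (ℓ s) ^ 2 := by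
    intro s hs
    have h1 := hℓroot s hs
    have h2 := hℓpos s hs
    nlinarith
  have hℓmono : ∀ s s', 0 ≤ s → s ≤ s' → ℓ s ≤ ℓ s' := by
    intro s s' hs hss
    have hs' : 0 ≤ s' := hs.trans hss
    have h1 := hℓroot s hs
    have h2 := hℓpos s hs
    have h3 := hℓroot s' hs'
    have h4 := hℓpos s' hs'
    have h5 := hℓsq s' hs'
    have key : (ℓ s' - ℓ s) * ((ℓ s') ^ 2 + ℓ s' * ℓ s + (ℓ s) ^ 2 - s') = ℓ s * (s' - s) := by
      linear_combination h1 - h3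
    have hfac : (0:ℝ) < (ℓ s') ^ 2 + ℓ s' * ℓ s + (ℓ s) ^ 2 - s' := by
      nlinarith [mul_pos h4 h2, sq_nonneg (ℓ s)]
    nlinarith [mul_nonneg h2.le (sub_nonneg.2 hss)]
  -- invariant
  have inv : ∀ t, 0 ≤ S t ∧ S t ≤ x t ∧ 0 ≤ 2 * d * lam - (x t) ^ 3 + x t * S t := by
    intro t
    induction t with
    | zero =>
      rw [hx0, hS0]
      norm_num
      linarith
    | succ t ih =>
      obtain ⟨h0, hSx, hP⟩ := ih
      have hxt0 : 0 ≤ x t := h0.trans hSx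
      have hPle : 2 * d * lam - (x t) ^ 3 + x t * S t ≤ Pmax :=
        hPmax.2 ⟨(x t, S t), ⟨hxt0, h0, hSx, hP⟩, rfl⟩
      have hxb : x t ≤ Sstar := aux_xle (2 * d * lam) Sstar (x t) (S t) hS1 hSstarroot h0 hSx hP
      have hηp : η * (2 * d * lam - (x t) ^ 3 + x t * S t) < 2 :=
        lt_of_le_of_lt (mul_le_mul_of_nonneg_left hPle hη.le) hηP
      refine ⟨?_, ?_, ?_⟩
      · rw [hS t]
        have hh : 0 ≤ η ^ 2 / 4 * (2 * d * lam - (x t) ^ 3 + x t * S t) ^ 2 := by positivity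
        linarith
      · rw [hx t, hS t]
        obtain ⟨p, hpdef⟩ : ∃ p', p' = 2 * d * lam - (x t) ^ 3 + x t * S t := ⟨_, rfl⟩
        rw [← hpdef] at hP hηp ⊢
        nlinarith [mul_nonneg (mul_nonneg hη.le hP) (show (0:ℝ) ≤ 2 - η * p by linarith)]
      · rw [hx t, hS t]
        exact aux_step (2 * d * lam) η Sstar (x t) (S t) hη h0 hSx hP hxb hηK hηp
  -- S is monotone, below Sinf
  have hSmono : Monotone S := by
    apply monotone_nat_of_le_succ
    intro t
    rw [hS t]
    have hh : 0 ≤ η ^ 2 / 4 * (2 * d * lam - (x t) ^ 3 + x t * S t) ^ 2 := by positivity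
    linarith
  have hStle : ∀ t, S t ≤ Sinf := fun t => hSmono.ge_of_tendsto hSinf t
  have hSinf0 : 0 ≤ Sinf := by
    have := hStle 0
    rw [hS0] at this
    exact this
  have hℓinf0 : 0 ≤ ℓ Sinf := (hℓpos Sinf hSinf0).le
  -- cube root facts
  obtain ⟨c, hc⟩ : ∃ c' : ℝ, c' = (2 * d * lam) ^ ((1 : ℝ) / 3) := ⟨_, rfl⟩
  have hcpos : 0 < c := by rw [hc]; exact Real.rpow_pos_of_pos hdl _
  have hc3 : c ^ 3 = 2 * d * lam := by
    rw [hc, ← Real.rpow_natCast ((2 * d * lam) ^ ((1:ℝ)/3)) 3, ← Real.rpow_mul hdl.le]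
    norm_num
  have hc2 : (2 * d * lam) ^ ((2 : ℝ) / 3) = c ^ 2 := by
    rw [hc, ← Real.rpow_natCast ((2 * d * lam) ^ ((1:ℝ)/3)) 2, ← Real.rpow_mul hdl.le]
    norm_num
  -- final estimate
  intro t
  obtain ⟨h0, hSx, hP⟩ := inv t
  have hxt0 : 0 ≤ x t := h0.trans hSx
  have hxb : x t ≤ Sstar := aux_xle (2 * d * lam) Sstar (x t) (S t) hS1 hSstarroot h0 hSx hP
  have hroot := hℓroot (S t) h0
  have hℓtpos := hℓpos (S t) h0
  -- x t ≤ ℓ (S t)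
  have key2 : (ℓ (S t) - x t) * ((ℓ (S t)) ^ 2 + ℓ (S t) * x t + (x t) ^ 2 - S t)
      = 2 * d * lam - (x t) ^ 3 + x t * S t := by
    linear_combination -hroot
  have hfacpos : (0:ℝ) < (ℓ (S t)) ^ 2 + ℓ (S t) * x t + (x t) ^ 2 - S t := by
    linarith [hℓsq (S t) h0, mul_nonneg hℓtpos.le hxt0, sq_nonneg (x t)]
  have hge : 0 ≤ ℓ (S t) - x t := by
    have h := hP
    rw [← key2] at h
    exact (mul_nonneg_iff_of_pos_right hfacpos).mp h
  -- c ≤ ℓ (S t)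
  have hcle : c ≤ ℓ (S t) := by
    have h3 : c ^ 3 ≤ (ℓ (S t)) ^ 3 := by
      nlinarith [mul_nonneg hℓtpos.le h0]
    exact le_of_pow_le_pow_left₀ (by norm_num) hℓtpos.le h3
  have hfac2 : (ℓ (S t)) ^ 2 - S t ≤ c ^ 2 := by
    nlinarith [mul_le_mul_of_nonneg_left hcle (sq_nonneg c), hroot, hc3, hℓtpos]
  have h5 : ℓ (S t) * x t ≤ ℓ Sinf * Sstar :=
    mul_le_mul (hℓmono (S t) Sinf h0 (hStle t)) hxb hxt0 hℓinf0
  have h4 : (x t) ^ 2 ≤ Sstar ^ 2 := by nlinarith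
  have hF : (ℓ (S t)) ^ 2 + ℓ (S t) * x t + (x t) ^ 2 - S t
      ≤ Sstar ^ 2 + Sstar * ℓ Sinf + c ^ 2 := by nlinarith
  have H2 : (ℓ (S t) - x t) * ((ℓ (S t)) ^ 2 + ℓ (S t) * x t + (x t) ^ 2 - S t)
      ≤ (ℓ (S t) - x t) * (Sstar ^ 2 + Sstar * ℓ Sinf + c ^ 2) :=
    mul_le_mul_of_nonneg_left hF hge
  rw [hx t, hc2]
  obtain ⟨p, hpdef⟩ : ∃ p', p' = 2 * d * lam - (x t) ^ 3 + x t * S t := ⟨_, rfl⟩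
  rw [← hpdef] at key2 ⊢
  calc x t + η / 2 * p - x t
      = η / 2 * ((ℓ (S t) - x t) * ((ℓ (S t)) ^ 2 + ℓ (S t) * x t + (x t) ^ 2 - S t)) := by
        rw [key2]; ring
    _ ≤ η / 2 * ((ℓ (S t) - x t) * (Sstar ^ 2 + Sstar * ℓ Sinf + c ^ 2)) :=
        mul_le_mul_of_nonneg_left H2 (by linarith)
    _ = η * ((Sstar ^ 2 + Sstar * ℓ Sinf + c ^ 2) / 2) * (ℓ (S t) - x t) := by ring
end

section
/- Let λ, d > 0, P(x, S) = 2dλ − x³ + xS, S* the unique positive solution of P(x, x) = 0, R = {(x, S) ∈ ℝ²_{≥0} : S ≤ x, P(x, S) ≥ 0}, and suppose η < min{2/(3(S*+1)²), 2/max_{(x,S)∈R} P(x, S)}. Let x_0 = S_0 = 0, x_{t+1} = x_t + (η/2) P(x_t, S_t), S_{t+1} = S_t + (η²/4) P(x_t, S_t)², let S_∞ = lim_t S_t, and let C_∞ = ℓ_{S_∞} / (2(2dλ)^{2/3} + 2dλ/ℓ_{S_∞}). Then for every t ≥ 0, ℓ_{S_{t+1}} − ℓ_{S_t} ≤ C_∞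 (x_{t+1} − x_t)². -/
set_option maxHeartbeats 1000000 in
/-- Under the step-size bound, with `C_∞ = ℓ_{S_∞} / (2(2dλ)^{2/3} + 2dλ/ℓ_{S_∞})`,
for every `t ≥ 0`: `ℓ_{S_{t+1}} − ℓ_{S_t} ≤ C_∞ (x_{t+1} − x_t)²`. -/
theorem stmt_17 (lam d η : ℝ) (hlam : 0 < lam) (hd : 0 < d) (hη : 0 < η)
    (Sstar : ℝ) (hSstar : 0 < Sstar)
    (hSstarroot : 2 * d * lam - Sstar ^ 3 + Sstar * Sstar = 0)
    (hSstaruniq : ∀ z, 0 < z → 2 * d * lam - z ^ 3 + z * z = 0 → z = Sstar)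
    (Pmax : ℝ)
    (hPmax : IsGreatest ((fun p : ℝ × ℝ => 2 * d * lam - p.1 ^ 3 + p.1 * p.2) ''
      {p : ℝ × ℝ | 0 ≤ p.1 ∧ 0 ≤ p.2 ∧ p.2 ≤ p.1 ∧
        0 ≤ 2 * d * lam - p.1 ^ 3 + p.1 * p.2}) Pmax)
    (hηbound : η < min (2 / (3 * (Sstar + 1) ^ 2)) (2 / Pmax))
    (ℓ : ℝ → ℝ)
    (hℓpos : ∀ s, 0 ≤ s → 0 < ℓ s)
    (hℓroot : ∀ s, 0 ≤ s → 2 * d * lam - (ℓ s) ^ 3 + ℓ s * s = 0)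
    (hℓuniq : ∀ s, 0 ≤ s → ∀ z, 0 < z → 2 * d * lam - z ^ 3 + z * s = 0 → z = ℓ s)
    (x S : ℕ → ℝ) (hx0 : x 0 = 0) (hS0 : S 0 = 0)
    (hx : ∀ t, x (t + 1) = x t + (η / 2) * (2 * d * lam - (x t) ^ 3 + x t * S t))
    (hS : ∀ t, S (t + 1) = S t + (η ^ 2 / 4) * (2 * d * lam - (x t) ^ 3 + x t * S t) ^ 2)
    (Sinf : ℝ) (hSinf : Filter.Tendsto S Filter.atTop (nhds Sinf)) :
    ∀ t, ℓ (S (t + 1)) - ℓ (S t) ≤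
      (ℓ Sinf / (2 * (2 * d * lam) ^ ((2 : ℝ) / 3) + 2 * d * lam / ℓ Sinf))
        * (x (t + 1) - x t) ^ 2 := by
  have hdl : (0:ℝ) < 2 * d * lam := by positivity
  -- S is monotone
  have hSmono : Monotone S := by
    apply monotone_nat_of_le_succ
    intro n
    rw [hS n]
    have : (0:ℝ) ≤ (η ^ 2 / 4) * (2 * d * lam - (x n) ^ 3 + x n * S n) ^ 2 := by positivity
    linarith
  have hSnn : ∀ n, 0 ≤ S n := fun n => by
    have := hSmono (Nat.zero_le n); rw [hS0] at this; exact this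
  have hSle : ∀ n, S n ≤ Sinf := fun n => hSmono.ge_of_tendsto hSinf n
  have hSinfnn : 0 ≤ Sinf := le_trans (hSnn 0) (hSle 0)
  -- key algebraic identity
  have hkey : ∀ s s', 0 ≤ s → 0 ≤ s' →
      (ℓ s' - ℓ s) * (ℓ s * ℓ s' ^ 2 + ℓ s ^ 2 * ℓ s' + 2 * d * lam)
        = ℓ s * ℓ s' * (s' - s) := by
    intro s s' hs hs'
    have e1 := hℓroot s hs
    have e2 := hℓroot s' hs'
    linear_combination ℓ s' * e1 - ℓ s * e2
  -- monotonicity of ℓ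
  have hmono : ∀ s s', 0 ≤ s → s ≤ s' → ℓ s ≤ ℓ s' := by
    intro s s' hs hss'
    have hs' : 0 ≤ s' := le_trans hs hss'
    have ha := hℓpos s hs
    have hb := hℓpos s' hs'
    have hk := hkey s s' hs hs'
    have hD : (0:ℝ) < ℓ s * ℓ s' ^ 2 + ℓ s ^ 2 * ℓ s' + 2 * d * lam := by positivity
    nlinarith [mul_nonneg (mul_nonneg ha.le hb.le) (sub_nonneg.mpr hss')]
  -- m = ℓ 0 and the rpow computation
  have hm : 0 < ℓ 0 := hℓpos 0 le_rfl
  have hm3 : (ℓ 0) ^ 3 = 2 * d * lam := by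
    have := hℓroot 0 le_rfl; linarith [this]
  have hK : (2 * d * lam) ^ ((2 : ℝ) / 3) = (ℓ 0) ^ 2 := by
    rw [← hm3, ← Real.rpow_natCast (ℓ 0) 3, ← Real.rpow_mul hm.le]
    norm_num
  intro t
  have hs : 0 ≤ S t := hSnn t
  have hs' : 0 ≤ S (t + 1) := hSnn (t + 1)
  have hss' : S t ≤ S (t + 1) := hSmono (Nat.le_succ t)
  have ha := hℓpos (S t) hs
  have hb := hℓpos (S (t + 1)) hs'
  have hL := hℓpos Sinf hSinfnn
  set a := ℓ (S t) with ha_def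
  set b := ℓ (S (t + 1)) with hb_def
  set L := ℓ Sinf with hL_def
  set m := ℓ 0 with hm_def
  have hma : m ≤ a := hmono 0 (S t) le_rfl hs
  have hab : a ≤ b := hmono (S t) (S (t + 1)) hs hss'
  have hbL : b ≤ L := hmono (S (t + 1)) Sinf hs' (hSle (t + 1))
  have haL : a ≤ L := le_trans hab hbL
  have hmL : m ≤ L := le_trans hma haL
  have key := hkey (S t) (S (t + 1)) hs hs'
  rw [← ha_def, ← hb_def] at key
  clear_value a b L m
  have hdiff : (x (t + 1) - x t) ^ 2 = S (t + 1) - S t := by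
    rw [hx t, hS t]; ring
  rw [hdiff, hK]
  have hden : (0:ℝ) < 2 * m ^ 2 + 2 * d * lam / L := by positivity
  rw [div_mul_eq_mul_div, le_div_iff₀ hden]
  -- goal : (b - a) * (2*m^2 + 2dλ/L) ≤ L * (S (t+1) - S t)
  have hrw : 2 * m ^ 2 + 2 * d * lam / L = (2 * m ^ 2 * L + 2 * d * lam) / L := by
    field_simp
  rw [hrw, ← mul_div_assoc, div_le_iff₀ hL]
  clear hPmax hSstaruniq hℓuniq hSinf hx hS hkey hmono hηbound hSstarroot
    hℓpos hℓroot hSmono hSnn hSle hx0 hS0 hdiff hrw hden hK hm3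
  have h2 : 2 * m ^ 2 ≤ L * (a + b) := by
    have u1 : m * m ≤ L * a := mul_le_mul hmL hma hm.le (hm.le.trans hmL)
    have u2 : m * m ≤ L * b := mul_le_mul hmL (hma.trans hab) hm.le (hm.le.trans hmL)
    nlinarith [u1, u2]
  have h3 : a * b ≤ L ^ 2 := by
    have u3 : a * b ≤ L * L := mul_le_mul haL hbL hb.le hL.le
    nlinarith [u3]
  have t1 := mul_le_mul_of_nonneg_left h2 (by positivity : (0:ℝ) ≤ a * b * L)
  have t2 := mul_le_mul_of_nonneg_left h3 (le_of_lt hdl)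
  have hbr : a * b * (2 * m ^ 2 * L + 2 * d * lam)
      ≤ L ^ 2 * (a * b ^ 2 + a ^ 2 * b + 2 * d * lam) := by nlinarith [t1, t2]
  have h4 : (b - a) * (a * b * (2 * m ^ 2 * L + 2 * d * lam))
      ≤ (b - a) * (L ^ 2 * (a * b ^ 2 + a ^ 2 * b + 2 * d * lam)) :=
    mul_le_mul_of_nonneg_left hbr (by linarith)
  have h5 : (b - a) * (a * b ^ 2 + a ^ 2 * b + 2 * d * lam)
      = a * b * (S (t + 1) - S t) := by linear_combination key
  have hab2 : 0 < a * b := mul_pos ha hb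
  nlinarith [h4, h5, hab2]
end

section
/- Let λ, d > 0 and let the sequences (x_t), (y_t) be defined by x_0 = y_0 = 0, x_{t+1} = x_t + η d (λ − x_t y_t), y_{t+1} = y_t + η x_t (λ − x_t y_t). Let P(x, S) = 2dλ − x³ + xS, S* the unique positive solution of P(x, x) = 0, and R = {(x, S) ∈ ℝ²_{≥0} : S ≤ x, P(x, S) ≥ 0}. If η < min{2/(3(S*+1)²), 2/max_{(x,S)∈R} P(x, S)}, then the product x_t y_t converges linearly to λ: there exist C > 0 and 0 < q < 1 such that |x_t y_t − λ| ≤ C q^t for all t ≥ 0. -/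
set_option maxHeartbeats 1000000

lemma stmt_19_aux (S X v : ℝ) (hS : 1 < S) (hroot : v - S ^ 3 + S * S = 0)
    (hX0 : 0 ≤ X) (h4 : 0 ≤ v - X ^ 3 + X * X) : X ≤ S := by
  by_contra hcon
  push_neg at hcon
  nlinarith [mul_pos (by linarith : (0:ℝ) < X - S)
    (by nlinarith : (0:ℝ) < X * X + X * S + S * S - X - S)]


/-- Main theorem: for the discretized FA dynamics with zero initialization and step size
`η < min{2/(3(S*+1)²), 2/max_R P}`, the product `x_t y_t` converges linearly to `λ`:
there exist `C > 0` and `0 < q < 1` with `|x_t y_t − λ| ≤ C q^t` for all `t`. -/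
theorem stmt_19 (lam d η : ℝ) (hlam : 0 < lam) (hd : 0 < d) (hη : 0 < η)
    (x y : ℕ → ℝ) (hx0 : x 0 = 0) (hy0 : y 0 = 0)
    (hx : ∀ t, x (t + 1) = x t + η * d * (lam - x t * y t))
    (hy : ∀ t, y (t + 1) = y t + η * x t * (lam - x t * y t))
    (Sstar : ℝ) (hSstar : 0 < Sstar)
    (hSstarroot : 2 * d * lam - Sstar ^ 3 + Sstar * Sstar = 0)
    (hSstaruniq : ∀ z, 0 < z → 2 * d * lam - z ^ 3 + z * z = 0 → z = Sstar)
    (Pmax : ℝ)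
    (hPmax : IsGreatest ((fun p : ℝ × ℝ => 2 * d * lam - p.1 ^ 3 + p.1 * p.2) ''
      {p : ℝ × ℝ | 0 ≤ p.1 ∧ 0 ≤ p.2 ∧ p.2 ≤ p.1 ∧
        0 ≤ 2 * d * lam - p.1 ^ 3 + p.1 * p.2}) Pmax)
    (hηbound : η < min (2 / (3 * (Sstar + 1) ^ 2)) (2 / Pmax)) :
    ∃ C > 0, ∃ q : ℝ, 0 < q ∧ q < 1 ∧
      ∀ t : ℕ, |x t * y t - lam| ≤ C * q ^ t := by
  -- Pmax ≥ 2dλ (value at (0,0))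
  have h2dlam : 2 * d * lam ≤ Pmax := by
    apply hPmax.2
    exact ⟨(0, 0), ⟨le_refl 0, le_refl 0, le_refl 0, by norm_num; positivity⟩, by norm_num⟩
  have hPpos : 0 < Pmax := lt_of_lt_of_le (by positivity) h2dlam
  have hη2 : η < 2 / Pmax := lt_of_lt_of_le hηbound (min_le_right _ _)
  rw [lt_div_iff₀ hPpos] at hη2
  have hηdlam : η * (d * lam) < 1 := by nlinarith
  have hη3 : η < 2 / (3 * (Sstar + 1) ^ 2) := lt_of_lt_of_le hηbound (min_le_left _ _)
  rw [lt_div_iff₀ (by positivity)] at hη3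
  have hS1 : 1 < Sstar := by nlinarith [mul_pos hd hlam, sq_nonneg Sstar]
  have hηlt1 : η < 1 := by nlinarith [sq_nonneg (Sstar + 1), sq_nonneg (Sstar - 1)]
  -- the invariant
  have inv : ∀ t, 0 ≤ x t ∧ 0 ≤ y t ∧ 2 * d * y t ≤ (x t) ^ 2 ∧
      (x t) ^ 2 - 2 * d * y t ≤ x t ∧ x t * y t ≤ lam ∧ x t ≤ Sstar := by
    intro t
    induction t with
    | zero =>
      rw [hx0, hy0]
      norm_num
      exact ⟨hlam.le, hSstar.le⟩
    | succ t ih =>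
      obtain ⟨hX0, hY0, hSlo, hSup, hr0, hXS⟩ := ih
      have hr : 0 ≤ lam - x t * y t := by linarith
      have hrlam : lam - x t * y t ≤ lam := by nlinarith [mul_nonneg hX0 hY0]
      have hXr : η * d * (lam - x t * y t) ≤ 1 := by nlinarith
      have hXrpos : 0 ≤ η * d * (lam - x t * y t) := by positivity
      have h1 : η ^ 2 * d * x t * (lam - x t * y t) ≤ η * x t := by
        nlinarith [mul_nonneg hη.le hX0]
      have h2 : η * ((x t) ^ 2 + d * y t) ≤ η * (3 / 2 * (x t) ^ 2) := by nlinarith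
      have hX2 : (x t) ^ 2 ≤ Sstar ^ 2 := by nlinarith
      have h3 : η * (3 / 2 * (x t) ^ 2) + η * x t < 1 := by
        have hb : η * (3 * Sstar ^ 2 + 2 * Sstar) < 2 := by
          nlinarith [mul_nonneg hη.le (by linarith : (0:ℝ) ≤ 4 * Sstar + 3)]
        nlinarith [mul_le_mul_of_nonneg_left hX2 hη.le,
          mul_le_mul_of_nonneg_left hXS hη.le]
      have hf : η * ((x t) ^ 2 + d * y t) + η ^ 2 * d * x t * (lam - x t * y t) < 1 := by
        linarith
      have hfpos : 0 ≤ η * ((x t) ^ 2 + d * y t) + η ^ 2 * d * x t * (lam - x t * y t) := by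
        have := mul_nonneg (mul_nonneg (mul_nonneg (sq_nonneg η) hd.le) hX0) hr
        have := mul_nonneg hη.le (by nlinarith [sq_nonneg (x t), mul_nonneg hd.le hY0] :
          (0:ℝ) ≤ (x t) ^ 2 + d * y t)
        linarith
      have hrid : lam - x (t+1) * y (t+1) =
          (lam - x t * y t) *
            (1 - (η * ((x t) ^ 2 + d * y t) + η ^ 2 * d * x t * (lam - x t * y t))) := by
        rw [hx t, hy t]; ring
      have hr' : 0 ≤ lam - x (t+1) * y (t+1) := by
        rw [hrid]; exact mul_nonneg hr (by linarith)
      have hx' : 0 ≤ x (t+1) := by rw [hx t]; linarith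
      have hy' : 0 ≤ y (t+1) := by
        rw [hy t]
        have := mul_nonneg (mul_nonneg hη.le hX0) hr
        linarith
      have hSid : (x (t+1)) ^ 2 - 2 * d * y (t+1) =
          ((x t) ^ 2 - 2 * d * y t) + (η * d * (lam - x t * y t)) ^ 2 := by
        rw [hx t, hy t]; ring
      have hSlo' : 2 * d * y (t+1) ≤ (x (t+1)) ^ 2 := by
        nlinarith [sq_nonneg (η * d * (lam - x t * y t))]
      have hSup' : (x (t+1)) ^ 2 - 2 * d * y (t+1) ≤ x (t+1) := by
        rw [hSid, hx t]
        nlinarith [sq_nonneg (η * d * (lam - x t * y t))]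
      have hXS' : x (t+1) ≤ Sstar := by
        by_contra hcon
        push_neg at hcon
        have hkey : 0 ≤ 2 * d * lam - (x (t+1)) ^ 3 +
            x (t+1) * ((x (t+1)) ^ 2 - 2 * d * y (t+1)) := by
          have hid : 2 * d * lam - (x (t+1)) ^ 3 +
              x (t+1) * ((x (t+1)) ^ 2 - 2 * d * y (t+1)) =
              2 * d * (lam - x (t+1) * y (t+1)) := by ring
          rw [hid]
          positivity
        have h4 : 0 ≤ 2 * d * lam - (x (t+1)) ^ 3 + x (t+1) * x (t+1) :=
          le_trans hkey (by linarith [mul_le_mul_of_nonneg_left hSup' hx'])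
        linarith [stmt_19_aux Sstar (x (t+1)) (2 * d * lam) hS1 hSstarroot hx' h4]
      exact ⟨hx', hy', hSlo', hSup', by linarith, hXS'⟩
  -- x is monotone and bounded below by ηdλ for t ≥ 1
  have hxmono : ∀ t, x t ≤ x (t+1) := by
    intro t
    obtain ⟨hX0, hY0, _, _, hr0, _⟩ := inv t
    rw [hx t]
    have := mul_nonneg (mul_nonneg hη.le hd.le) (by linarith : (0:ℝ) ≤ lam - x t * y t)
    linarith
  have hx1 : x 1 = η * d * lam := by rw [hx 0, hx0, hy0]; ring
  have hxlb : ∀ t, η * d * lam ≤ x (t+1) := by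
    intro t
    induction t with
    | zero => rw [hx1]
    | succ t ih => exact le_trans ih (hxmono (t+1))
  set q : ℝ := 1 - η * (η * d * lam) ^ 2 with hqdef
  have hqlt1 : q < 1 := by
    have : 0 < η * (η * d * lam) ^ 2 := by positivity
    simp only [hqdef]; linarith
  have hq0 : 0 < q := by
    have h5 : η * (η * d * lam) ^ 2 < 1 := by nlinarith [mul_pos (mul_pos hη hd) hlam]
    simp only [hqdef]; linarith
  -- contraction for t ≥ 1
  have hcontr : ∀ t, lam - x (t+2) * y (t+2) ≤ q * (lam - x (t+1) * y (t+1)) := by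
    intro t
    obtain ⟨hX0, hY0, hSlo, hSup, hr0, hXS⟩ := inv (t+1)
    have hr : 0 ≤ lam - x (t+1) * y (t+1) := by linarith
    have hrid : lam - x (t+2) * y (t+2) =
        (lam - x (t+1) * y (t+1)) *
          (1 - (η * ((x (t+1)) ^ 2 + d * y (t+1)) +
            η ^ 2 * d * x (t+1) * (lam - x (t+1) * y (t+1)))) := by
      rw [hx (t+1), hy (t+1)]; ring
    have hlb := hxlb t
    have hfq : 1 - (η * ((x (t+1)) ^ 2 + d * y (t+1)) +
        η ^ 2 * d * x (t+1) * (lam - x (t+1) * y (t+1))) ≤ q := by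
      have hxx : (η * d * lam) ^ 2 ≤ (x (t+1)) ^ 2 := by
        have h0 : (0:ℝ) ≤ η * d * lam := by positivity
        nlinarith
      have t1 : 0 ≤ η * d * y (t+1) := by positivity
      have t2 : 0 ≤ η ^ 2 * d * x (t+1) * (lam - x (t+1) * y (t+1)) := by
        have := mul_nonneg (mul_nonneg (mul_nonneg (sq_nonneg η) hd.le) hX0) hr
        linarith
      simp only [hqdef]
      nlinarith
    rw [hrid]
    calc (lam - x (t+1) * y (t+1)) *
          (1 - (η * ((x (t+1)) ^ 2 + d * y (t+1)) +
            η ^ 2 * d * x (t+1) * (lam - x (t+1) * y (t+1))))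
        ≤ (lam - x (t+1) * y (t+1)) * q := mul_le_mul_of_nonneg_left hfq hr
      _ = q * (lam - x (t+1) * y (t+1)) := by ring
  have hy1 : y 1 = 0 := by rw [hy 0, hx0, hy0]; ring
  have hdecay : ∀ t, lam - x (t+1) * y (t+1) ≤ lam * q ^ t := by
    intro t
    induction t with
    | zero => rw [hx1, hy1]; norm_num
    | succ t ih =>
      calc lam - x (t+2) * y (t+2) ≤ q * (lam - x (t+1) * y (t+1)) := hcontr t
        _ ≤ q * (lam * q ^ t) := mul_le_mul_of_nonneg_left ih hq0.le
        _ = lam * q ^ (t+1) := by ring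
  refine ⟨lam / q, by positivity, q, hq0, hqlt1, ?_⟩
  intro t
  match t with
  | 0 =>
    rw [hx0, hy0]
    rw [abs_of_nonpos (by linarith)]
    rw [pow_zero, mul_one, le_div_iff₀ hq0]
    nlinarith
  | (s+1) =>
    obtain ⟨_, _, _, _, hr0, _⟩ := inv (s+1)
    rw [abs_of_nonpos (by linarith)]
    have := hdecay s
    rw [div_mul_eq_mul_div, le_div_iff₀ hq0]
    have hqs : 0 ≤ q ^ s := by positivity
    calc (-(x (s+1) * y (s+1) - lam)) * q = (lam - x (s+1) * y (s+1)) * q := by ring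
      _ ≤ (lam * q ^ s) * q := mul_le_mul_of_nonneg_right this hq0.le
      _ = lam * q ^ (s+1) := by ring
end
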